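/- Let A ∈ ℝⁿˣⁿ be symmetric and not positive semidefinite (so λ_min(A) < 0), let a, b₁, …, b_p, x₀ ∈ ℝⁿ and u, β₁, …, β_p ∈ ℝ. Suppose the dimension of the span of span{b₁, …, b_p} ∪ R(A − λ_min(A) I_n) is at most n − 1. Then the extended trust region subproblem (ETRS): minimize xᵀA x + aᵀx over x ∈ ℝⁿ subject to ‖x − x₀‖² ≤ u and b_iᵀx ≤ β_i for i = 1, …, p, has the same optimal value as the convex problem: minimize xᵀ(A − λ_min(A) I_n) x + aᵀx + λ_min(A)(u + 2 xᵀx₀ − ‖x₀‖²) over the same feasible set {x : ‖x − x₀‖² ≤ u, b_iᵀx ≤ β_i, i = 1, …, p}. -/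

import Mathlib

open Matrix

private lemma exists_dot_orthogonal (n : ℕ) (hn : 0 < n) (W : Submodule ℝ (Fin n → ℝ))
    (hdim : Module.finrank ℝ W ≤ n - 1) :
    ∃ v : Fin n → ℝ, v ≠ 0 ∧ ∀ w ∈ W, v ⬝ᵥ w = 0 := by
  let e : (Fin n → ℝ) ≃ₗ[ℝ] EuclideanSpace ℝ (Fin n) := (WithLp.linearEquiv 2 ℝ (Fin n → ℝ)).symm
  set W' : Submodule ℝ (EuclideanSpace ℝ (Fin n)) := W.map (e : (Fin n → ℝ) →ₗ[ℝ] EuclideanSpace ℝ (Fin n)) with hW'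
  have hfr : Module.finrank ℝ W' = Module.finrank ℝ W := LinearEquiv.finrank_map_eq e W
  have hWne : W' ≠ ⊤ := by
    intro h
    rw [h] at hfr
    rw [finrank_top] at hfr
    rw [finrank_euclideanSpace_fin] at hfr
    omega
  have hbot : W'ᗮ ≠ ⊥ := by
    intro h
    exact hWne (Submodule.orthogonal_eq_bot_iff.mp h)
  obtain ⟨v', hv'mem, hv'ne⟩ := Submodule.exists_mem_ne_zero_of_ne_bot hbot
  refine ⟨e.symm v', ?_, ?_⟩
  · intro h
    apply hv'ne
    have := congrArg e h
    simpa using this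
  · intro w hw
    have hmem : e w ∈ W' := Submodule.mem_map_of_mem hw
    have hinner : (inner ℝ (e w) v' : ℝ) = 0 := (Submodule.mem_orthogonal W' v').mp hv'mem (e w) hmem
    have : (e.symm v') ⬝ᵥ w = (inner ℝ (e w) v' : ℝ) := by
      simp [PiLp.inner_apply, RCLike.inner_apply, dotProduct, e, mul_comm]
    rw [this, hinner]

set_option maxHeartbeats 1000000

theorem stmt5 (n p : ℕ) (A : Matrix (Fin n) (Fin n) ℝ) (hA : A.IsSymm)
    (hnpsd : ¬ A.PosSemidef) (lmin : ℝ)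
    (hlmin : IsGreatest {c : ℝ | (A - c • (1 : Matrix (Fin n) (Fin n) ℝ)).PosSemidef} lmin)
    (a : Fin n → ℝ) (b : Fin p → Fin n → ℝ) (x0 : Fin n → ℝ) (u : ℝ) (β : Fin p → ℝ)
    (hdim : Module.finrank ℝ
      ↥(Submodule.span ℝ (Set.range b) ⊔
          LinearMap.range (A - lmin • (1 : Matrix (Fin n) (Fin n) ℝ)).mulVecLin) ≤ n - 1) :
    sInf ((fun x : Fin n → ℝ => ((x ⬝ᵥ (A *ᵥ x) + a ⬝ᵥ x : ℝ) : EReal)) ''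
        {x | (x - x0) ⬝ᵥ (x - x0) ≤ u ∧ ∀ i, b i ⬝ᵥ x ≤ β i}) =
    sInf ((fun x : Fin n → ℝ =>
        ((x ⬝ᵥ ((A - lmin • (1 : Matrix (Fin n) (Fin n) ℝ)) *ᵥ x) + a ⬝ᵥ x
            + lmin * (u + 2 * (x ⬝ᵥ x0) - x0 ⬝ᵥ x0) : ℝ) : EReal)) ''
        {x | (x - x0) ⬝ᵥ (x - x0) ≤ u ∧ ∀ i, b i ⬝ᵥ x ≤ β i}) := by
  set B := A - lmin • (1 : Matrix (Fin n) (Fin n) ℝ) with hB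
  have hBpsd : B.PosSemidef := hlmin.1
  have hBsymm : Bᵀ = B := by
    rw [hB, transpose_sub, transpose_smul, transpose_one, hA]
  -- symmetric bilinear identity
  have hsym : ∀ x y : Fin n → ℝ, x ⬝ᵥ (B *ᵥ y) = (B *ᵥ x) ⬝ᵥ y := by
    intro x y
    rw [dotProduct_mulVec, ← mulVec_transpose, hBsymm]
  -- lmin < 0
  have hlneg : lmin < 0 := by
    by_contra h
    push_neg at h
    apply hnpsd
    have hAeq : A = B + lmin • (1 : Matrix (Fin n) (Fin n) ℝ) := by rw [hB]; abel
    rw [posSemidef_iff_dotProduct_mulVec]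
    constructor
    · show Aᴴ = A
      rw [conjTranspose_eq_transpose_of_trivial, hA]
    · intro x
      have hx : star x = x := by simp
      rw [hAeq, add_mulVec, smul_mulVec, one_mulVec, dotProduct_add, dotProduct_smul, hx,
        smul_eq_mul]
      have h1 := hBpsd.dotProduct_mulVec_nonneg x
      rw [hx] at h1
      have h2 : (0:ℝ) ≤ x ⬝ᵥ x := Finset.sum_nonneg fun i _ => mul_self_nonneg _
      have := mul_nonneg h h2
      positivity
  -- get orthogonal vector v
  have hn : 0 < n := by
    rcases Nat.eq_zero_or_pos n with h0 | h
    · subst h0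
      refine absurd (posSemidef_iff_dotProduct_mulVec.mpr ⟨?_, fun x => by simp [dotProduct]⟩) hnpsd
      ext i j
      exact i.elim0
    · exact h
  obtain ⟨v, hv0, hvW⟩ : ∃ v : Fin n → ℝ, v ≠ 0 ∧ ∀ w ∈ (Submodule.span ℝ (Set.range b) ⊔
      LinearMap.range B.mulVecLin : Submodule ℝ (Fin n → ℝ)), v ⬝ᵥ w = 0 :=
    exists_dot_orthogonal n hn _ hdim
  have hbv : ∀ i, b i ⬝ᵥ v = 0 := by
    intro i
    rw [dotProduct_comm]
    exact hvW _ (Submodule.mem_sup_left (Submodule.subset_span ⟨i, rfl⟩))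
  have hBv : B *ᵥ v = 0 := by
    have h1 : ∀ w : Fin n → ℝ, (B *ᵥ v) ⬝ᵥ w = 0 := by
      intro w
      rw [← hsym]
      exact hvW _ (Submodule.mem_sup_right ⟨w, rfl⟩)
    have := h1 (B *ᵥ v)
    exact dotProduct_self_eq_zero.mp this
  have hvv : 0 < v ⬝ᵥ v := by
    rcases lt_or_eq_of_le (Finset.sum_nonneg fun i _ => mul_self_nonneg (v i) :
        (0:ℝ) ≤ v ⬝ᵥ v) with h'|h'
    · exact h'
    · exact absurd (dotProduct_self_eq_zero.mp h'.symm) hv0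
  -- key algebraic identity
  have key : ∀ z : Fin n → ℝ, z ⬝ᵥ (A *ᵥ z) + a ⬝ᵥ z
      = (z ⬝ᵥ (B *ᵥ z) + a ⬝ᵥ z + lmin * (u + 2*(z ⬝ᵥ x0) - x0 ⬝ᵥ x0))
        + lmin * ((z - x0) ⬝ᵥ (z - x0) - u) := by
    intro z
    have hAz : A *ᵥ z = B *ᵥ z + lmin • z := by
      rw [hB, sub_mulVec, smul_mulVec, one_mulVec]; abel
    rw [hAz, dotProduct_add, dotProduct_smul, smul_eq_mul]
    have hexp : (z - x0) ⬝ᵥ (z - x0) = z ⬝ᵥ z - 2*(z ⬝ᵥ x0) + x0 ⬝ᵥ x0 := by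
      rw [sub_dotProduct, dotProduct_sub, dotProduct_sub, dotProduct_comm x0 z]; ring
    rw [hexp]; ring
  apply le_antisymm
  · -- sInf orig ≤ sInf relax : for each feasible x, construct boundary y
    apply sInf_le_sInf_of_isCoinitialFor
    rintro r ⟨x, ⟨hxu, hxb⟩, rfl⟩
    -- set up the quadratic root
    set α : ℝ := v ⬝ᵥ v with hα
    set β2 : ℝ := v ⬝ᵥ (x - x0) with hβ2
    set γ : ℝ := (x - x0) ⬝ᵥ (x - x0) - u with hγ
    have hγ0 : γ ≤ 0 := by rw [hγ]; linarith
    set c : ℝ := a ⬝ᵥ v + 2*lmin*(v ⬝ᵥ x0) with hc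
    set D : ℝ := β2^2 - α*γ with hD
    have hD0 : β2^2 ≤ D := by
      rw [hD]; nlinarith
    set s : ℝ := Real.sqrt D with hs
    have hs2 : s^2 = D := Real.sq_sqrt (by nlinarith)
    have hsabs : |β2| ≤ s := by
      rw [hs, ← Real.sqrt_sq_eq_abs]
      exact Real.sqrt_le_sqrt hD0
    set t : ℝ := if c ≤ 0 then (-β2 + s)/α else (-β2 - s)/α with ht
    have hqt : α*t^2 + 2*β2*t + γ = 0 := by
      have h1 := abs_le.mp hsabs
      rcases le_or_gt c 0 with hcle | hclt
      · rw [ht, if_pos hcle]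
        field_simp
        nlinarith [hs2]
      · rw [ht, if_neg (not_le.mpr hclt)]
        field_simp
        nlinarith [hs2]
    have htc : t*c ≤ 0 := by
      have h1 := abs_le.mp hsabs
      rcases le_or_gt c 0 with hcle | hclt
      · rw [ht, if_pos hcle]
        apply mul_nonpos_of_nonneg_of_nonpos _ hcle
        apply div_nonneg _ (le_of_lt hvv)
        linarith
      · rw [ht, if_neg (not_le.mpr hclt)]
        apply mul_nonpos_of_nonpos_of_nonneg _ (le_of_lt hclt)
        apply div_nonpos_iff.mpr
        right
        constructor
        · linarith
        · exact le_of_lt hvv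
    -- the boundary point
    set y : Fin n → ℝ := x + t • v with hy
    have hynorm : (y - x0) ⬝ᵥ (y - x0) = u := by
      have hrw : y - x0 = (x - x0) + t • v := by rw [hy]; abel
      rw [hrw]
      simp only [add_dotProduct, dotProduct_add, smul_dotProduct, dotProduct_smul, smul_eq_mul]
      rw [dotProduct_comm (x - x0) v]
      have h2 : (x - x0) ⬝ᵥ (x - x0) = γ + u := by rw [hγ]; ring
      rw [h2]
      nlinarith [hqt]
    have hyfeas : (y - x0) ⬝ᵥ (y - x0) ≤ u ∧ ∀ i, b i ⬝ᵥ y ≤ β i := by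
      refine ⟨le_of_eq hynorm, fun i => ?_⟩
      rw [hy, dotProduct_add, dotProduct_smul, smul_eq_mul, hbv i]
      simpa using hxb i
    -- objective value at y
    have hrelaxy : y ⬝ᵥ (B *ᵥ y) + a ⬝ᵥ y + lmin * (u + 2*(y ⬝ᵥ x0) - x0 ⬝ᵥ x0)
        = (x ⬝ᵥ (B *ᵥ x) + a ⬝ᵥ x + lmin * (u + 2*(x ⬝ᵥ x0) - x0 ⬝ᵥ x0)) + t*c := by
      have hBy : B *ᵥ y = B *ᵥ x := by
        rw [hy, mulVec_add, mulVec_smul, hBv, smul_zero, add_zero]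
      rw [hBy, hy]
      simp only [add_dotProduct, dotProduct_add, smul_dotProduct, dotProduct_smul, smul_eq_mul]
      rw [hsym v x, hBv, zero_dotProduct, hc]
      ring
    have hyorig : y ⬝ᵥ (A *ᵥ y) + a ⬝ᵥ y
        = (x ⬝ᵥ (B *ᵥ x) + a ⬝ᵥ x + lmin * (u + 2*(x ⬝ᵥ x0) - x0 ⬝ᵥ x0)) + t*c := by
      rw [key y, hynorm, sub_self, mul_zero, add_zero, hrelaxy]
    refine ⟨_, ⟨y, hyfeas, rfl⟩, ?_⟩
    rw [EReal.coe_le_coe_iff]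
    rw [hyorig]
    linarith
  · -- sInf relax ≤ sInf orig : pointwise
    apply sInf_le_sInf_of_isCoinitialFor
    rintro r ⟨x, hx, rfl⟩
    refine ⟨_, ⟨x, hx, rfl⟩, ?_⟩
    rw [EReal.coe_le_coe_iff]
    have := key x
    have h1 : lmin * ((x - x0) ⬝ᵥ (x - x0) - u) ≥ 0 := by
      have : (x - x0) ⬝ᵥ (x - x0) - u ≤ 0 := by linarith [hx.1]
      nlinarith
    linarith [this]
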